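/- arXiv:2101.05264 — 3 statements merged into one kernel-verified Lean document; each statement's English description precedes it below -/
import Mathlib

section
/- Let D be a digraph and let T be a normal spanning arborescence of D rooted at r. Then for every solid ray R of D there is exactly one ray of T starting at r (an injective map r' : ℕ → V with r' 0 = r and T (r' n) (r' (n+1)) for all n) that is equivalent to R in D. -/
/-- Mutual reachability in `D − X`: `u` and `v` lie in the same strong component
of the restriction of `E` to the complement of `X`. -/
def SameComp {V : Type*} (E : V → V → Prop) (X : Set V) (u v : V) : Prop :=
  Relation.ReflTransGen (fun a b => a ∉ X ∧ b ∉ X ∧ E a b) u v ∧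
  Relation.ReflTransGen (fun a b => a ∉ X ∧ b ∉ X ∧ E a b) v u

/-- A digraph is solid if deleting any finite vertex set leaves only finitely many
strong components. -/
def IsSolid {V : Type*} (E : V → V → Prop) : Prop :=
  ∀ X : Set V, X.Finite →
    {C : Set V | ∃ v, v ∉ X ∧ C = {u | u ∉ X ∧ SameComp E X u v}}.Finite

/-- A ray in a digraph. -/
def IsRay {V : Type*} (E : V → V → Prop) (r : ℕ → V) : Prop :=
  Function.Injective r ∧ ∀ n : ℕ, E (r n) (r (n + 1))

/-- A solid ray: it has a tail in a single strong component of `D − X`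
for every finite `X`. -/
def IsSolidRay {V : Type*} (E : V → V → Prop) (r : ℕ → V) : Prop :=
  IsRay E r ∧ ∀ X : Set V, X.Finite →
    ∃ N : ℕ, (∀ n : ℕ, N ≤ n → r n ∉ X) ∧
      (∀ m n : ℕ, N ≤ m → N ≤ n → SameComp E X (r m) (r n))

/-- Two rays are equivalent if for every finite `X` they have tails in
the same strong component of `D − X`. -/
def RayEquiv {V : Type*} (E : V → V → Prop) (r r' : ℕ → V) : Prop :=
  ∀ X : Set V, X.Finite →
    ∃ N M : ℕ, (∀ n : ℕ, N ≤ n → r n ∉ X) ∧ (∀ m : ℕ, M ≤ m → r' m ∉ X) ∧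
      (∀ n m : ℕ, N ≤ n → M ≤ m → SameComp E X (r n) (r' m))

/-- `T` is a spanning arborescence of the digraph `E` rooted at `root`. -/
def IsSpanningArborescence {V : Type*} (E T : V → V → Prop) (root : V) : Prop :=
  (∀ u v : V, T u v → E u v) ∧
  (∀ u : V, ¬ T u root) ∧
  (∀ v : V, v ≠ root → ∃! u : V, T u v) ∧
  (∀ v : V, Relation.ReflTransGen T root v)

/-- The normal assistant of `T` in `E`: the tree edges of `T` together with an
edge `(v, w)` for every two tree-incomparable vertices `v, w` such that `E` has
an edge from the up-closure of `v` to the up-closure of `w`. -/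
def NormalAssistant {V : Type*} (E T : V → V → Prop) : V → V → Prop := fun v w =>
  T v w ∨
    (¬ Relation.ReflTransGen T v w ∧ ¬ Relation.ReflTransGen T w v ∧
      ∃ v' w' : V, Relation.ReflTransGen T v v' ∧ Relation.ReflTransGen T w w' ∧ E v' w')

/-- `T` is normal in `E` if its normal assistant is acyclic. -/
def IsNormal {V : Type*} (E T : V → V → Prop) : Prop :=
  Irreflexive (Relation.TransGen (NormalAssistant E T))


section NTAux

variable {V : Type*} {E T : V → V → Prop} {root : V}

private lemma tgIrrefl (h_norm : IsNormal E T) : ∀ v, ¬ Relation.TransGen T v v := by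
  intro v hv
  exact h_norm v (Relation.TransGen.mono (fun a b h => Or.inl h) _ _ hv)

private lemma leAntisymm (h_norm : IsNormal E T) {u v : V}
    (h1 : Relation.ReflTransGen T u v) (h2 : Relation.ReflTransGen T v u) : u = v := by
  by_contra hne
  rcases h1.cases_head with h | ⟨c, hc1, hc2⟩
  · exact hne h
  · exact tgIrrefl h_norm u ((Relation.TransGen.head' hc1 hc2).trans_left h2)

private lemma eqRootOfLe (hroot : ∀ u, ¬ T u root) {u : V}
    (h : Relation.ReflTransGen T u root) : u = root := by
  rcases h.cases_tail with h | ⟨c, _, hc2⟩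
  · exact h.symm
  · exact absurd hc2 (hroot c)

private lemma leParentStep (hroot : ∀ u, ¬ T u root) (huniq : ∀ v, v ≠ root → ∃! u, T u v)
    {p v u : V} (hp : T p v) (h : Relation.ReflTransGen T u v) :
    u = v ∨ Relation.ReflTransGen T u p := by
  rcases h.cases_tail with h | ⟨c, hc1, hc2⟩
  · exact Or.inl h.symm
  · right
    have hvne : v ≠ root := fun hv => hroot p (hv ▸ hp)
    have : c = p := (huniq v hvne).unique hc2 hp
    exact this ▸ hc1

private lemma downsetFinite (hroot : ∀ u, ¬ T u root) (huniq : ∀ v, v ≠ root → ∃! u, T u v)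
    (hreach : ∀ v, Relation.ReflTransGen T root v) (v : V) :
    Set.Finite {u | Relation.ReflTransGen T u v} := by
  have h := hreach v
  induction h with
  | refl =>
      refine Set.Finite.subset (Set.finite_singleton root) ?_
      intro u hu
      exact eqRootOfLe hroot hu
  | @tail b c h1 h2 ih =>
      refine Set.Finite.subset (ih.insert c) ?_
      intro u hu
      rcases leParentStep hroot huniq h2 hu with h | h
      · exact Or.inl h
      · exact Or.inr h

private lemma downsetChain (hroot : ∀ u, ¬ T u root) (huniq : ∀ v, v ≠ root → ∃! u, T u v)
    (hreach : ∀ v, Relation.ReflTransGen T root v) {v : V} :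
    ∀ u w, Relation.ReflTransGen T u v → Relation.ReflTransGen T w v →
      Relation.ReflTransGen T u w ∨ Relation.ReflTransGen T w u := by
  have h := hreach v
  induction h with
  | refl =>
      intro u w hu hw
      rw [eqRootOfLe hroot hu, eqRootOfLe hroot hw]
      exact Or.inl .refl
  | @tail b c h1 h2 ih =>
      intro u w hu hw
      rcases leParentStep hroot huniq h2 hu with rfl | hu'
      · exact Or.inr hw
      rcases leParentStep hroot huniq h2 hw with rfl | hw'
      · exact Or.inl (hu'.trans (Relation.ReflTransGen.single h2))
      · exact ih u w hu' hw'

private lemma regionMinExists (hroot : ∀ u, ¬ T u root) (huniq : ∀ v, v ≠ root → ∃! u, T u v)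
    (hreach : ∀ v, Relation.ReflTransGen T root v) {Y : Set V}
    (hdc : ∀ u w, Relation.ReflTransGen T u w → w ∈ Y → u ∈ Y) {v : V} (hv : v ∉ Y) :
    ∃ a, Relation.ReflTransGen T a v ∧ a ∉ Y ∧
      ∀ u, Relation.ReflTransGen T u a → u ∉ Y → u = a := by
  suffices H : ∀ v, Relation.ReflTransGen T root v → v ∉ Y →
      ∃ a, Relation.ReflTransGen T a v ∧ a ∉ Y ∧
        ∀ u, Relation.ReflTransGen T u a → u ∉ Y → u = a from H v (hreach v) hv
  intro v h
  induction h with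
  | refl =>
      intro hv
      exact ⟨root, .refl, hv, fun u hu _ => eqRootOfLe hroot hu⟩
  | @tail b c h1 h2 ih =>
      intro hv
      by_cases hb : b ∈ Y
      · refine ⟨c, .refl, hv, fun u hu hnu => ?_⟩
        rcases leParentStep hroot huniq h2 hu with h | h
        · exact h
        · exact absurd (hdc u b h hb) hnu
      · obtain ⟨a, ha1, ha2, ha3⟩ := ih hb
        exact ⟨a, ha1.trans (Relation.ReflTransGen.single h2), ha2, ha3⟩

private lemma regionMinUnique (hroot : ∀ u, ¬ T u root) (huniq : ∀ v, v ≠ root → ∃! u, T u v)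
    (hreach : ∀ v, Relation.ReflTransGen T root v) {Y : Set V} {v a b : V}
    (ha1 : Relation.ReflTransGen T a v) (ha2 : a ∉ Y)
    (hb1 : Relation.ReflTransGen T b v) (hb2 : b ∉ Y)
    (hb3 : ∀ u, Relation.ReflTransGen T u b → u ∉ Y → u = b)
    (ha3 : ∀ u, Relation.ReflTransGen T u a → u ∉ Y → u = a) : a = b := by
  rcases downsetChain hroot huniq hreach a b ha1 hb1 with h | h
  · exact hb3 a h ha2
  · exact (ha3 b h hb2).symm

private lemma crossingAssistant {Y : Set V} {a b x y : V}
    (ha2 : a ∉ Y) (ha3 : ∀ u, Relation.ReflTransGen T u a → u ∉ Y → u = a)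
    (hb2 : b ∉ Y) (hb3 : ∀ u, Relation.ReflTransGen T u b → u ∉ Y → u = b)
    (hne : a ≠ b) (hax : Relation.ReflTransGen T a x) (hby : Relation.ReflTransGen T b y)
    (hxy : E x y) : NormalAssistant E T a b :=
  Or.inr ⟨fun h => hne (hb3 a h ha2), fun h => hne ((ha3 b h hb2).symm),
    x, y, hax, hby, hxy⟩

private lemma walkRegions (hroot : ∀ u, ¬ T u root) (huniq : ∀ v, v ≠ root → ∃! u, T u v)
    (hreach : ∀ v, Relation.ReflTransGen T root v) {Y : Set V}
    (hdc : ∀ u w, Relation.ReflTransGen T u w → w ∈ Y → u ∈ Y) {u v : V}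
    (h : Relation.ReflTransGen (fun p q => p ∉ Y ∧ q ∉ Y ∧ E p q) u v) :
    ∀ a b, (Relation.ReflTransGen T a u ∧ a ∉ Y ∧
        (∀ w, Relation.ReflTransGen T w a → w ∉ Y → w = a)) →
      (Relation.ReflTransGen T b v ∧ b ∉ Y ∧
        (∀ w, Relation.ReflTransGen T w b → w ∉ Y → w = b)) →
      a = b ∨ Relation.TransGen (NormalAssistant E T) a b := by
  induction h with
  | refl =>
      intro a b ha hb
      exact Or.inl (regionMinUnique hroot huniq hreach ha.1 ha.2.1 hb.1 hb.2.1 hb.2.2 ha.2.2)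
  | @tail c d h1 h2 ih =>
      intro a b ha hb
      obtain ⟨m, hm1, hm2, hm3⟩ := regionMinExists hroot huniq hreach hdc h2.1
      have hmid := ih a m ha ⟨hm1, hm2, hm3⟩
      by_cases hmb : m = b
      · subst hmb; exact hmid
      · have hH : NormalAssistant E T m b :=
          crossingAssistant hm2 hm3 hb.2.1 hb.2.2 hmb hm1 hb.1 h2.2.2
        rcases hmid with rfl | hmid
        · exact Or.inr (Relation.TransGen.single hH)
        · exact Or.inr (hmid.tail hH)

private lemma sameCompMinEq (hroot : ∀ u, ¬ T u root) (huniq : ∀ v, v ≠ root → ∃! u, T u v)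
    (hreach : ∀ v, Relation.ReflTransGen T root v) (h_norm : IsNormal E T) {Y : Set V}
    (hdc : ∀ u w, Relation.ReflTransGen T u w → w ∈ Y → u ∈ Y) {u v a b : V}
    (h : SameComp E Y u v)
    (ha : Relation.ReflTransGen T a u ∧ a ∉ Y ∧
        (∀ w, Relation.ReflTransGen T w a → w ∉ Y → w = a))
    (hb : Relation.ReflTransGen T b v ∧ b ∉ Y ∧
        (∀ w, Relation.ReflTransGen T w b → w ∉ Y → w = b)) : a = b := by
  rcases walkRegions hroot huniq hreach hdc h.1 a b ha hb with h1 | h1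
  · exact h1
  rcases walkRegions hroot huniq hreach hdc h.2 b a hb ha with h2 | h2
  · exact h2.symm
  · exact absurd (h1.trans h2) (h_norm a)

private lemma scMono {X Y : Set V} (hXY : X ⊆ Y) {u v : V} (h : SameComp E Y u v) :
    SameComp E X u v :=
  ⟨Relation.ReflTransGen.mono (fun p q hpq => ⟨fun hp => hpq.1 (hXY hp), fun hq => hpq.2.1 (hXY hq), hpq.2.2⟩) _ _ h.1,
   Relation.ReflTransGen.mono (fun p q hpq => ⟨fun hp => hpq.1 (hXY hp), fun hq => hpq.2.1 (hXY hq), hpq.2.2⟩) _ _ h.2⟩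

private lemma scTrans {X : Set V} {u v w : V} (h1 : SameComp E X u v) (h2 : SameComp E X v w) :
    SameComp E X u w := ⟨h1.1.trans h2.1, h2.2.trans h1.2⟩

private lemma scSymm {X : Set V} {u v : V} (h : SameComp E X u v) : SameComp E X v u :=
  ⟨h.2, h.1⟩

private lemma chainMaxFinset (F : Finset V) (hne : F.Nonempty)
    (hch : ∀ u ∈ F, ∀ v ∈ F, Relation.ReflTransGen T u v ∨ Relation.ReflTransGen T v u) :
    ∃ a ∈ F, ∀ w ∈ F, Relation.ReflTransGen T w a := by
  classical
  induction F using Finset.induction_on with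
  | empty => exact absurd hne (by simp)
  | @insert x s hx ih =>
      rcases s.eq_empty_or_nonempty with rfl | hs
      · exact ⟨x, by simp, by intro w hw; simp at hw; subst hw; exact .refl⟩
      · obtain ⟨b, hb1, hb2⟩ := ih hs (fun u hu v hv =>
          hch u (Finset.mem_insert_of_mem hu) v (Finset.mem_insert_of_mem hv))
        rcases hch x (Finset.mem_insert_self x s) b (Finset.mem_insert_of_mem hb1) with h | h
        · refine ⟨b, Finset.mem_insert_of_mem hb1, ?_⟩
          intro w hw
          rcases Finset.mem_insert.mp hw with rfl | hw
          · exact h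
          · exact hb2 w hw
        · refine ⟨x, Finset.mem_insert_self x s, ?_⟩
          intro w hw
          rcases Finset.mem_insert.mp hw with rfl | hw
          · exact .refl
          · exact (hb2 w hw).trans h

private lemma chainMaxSet {A : Set V} (hf : A.Finite) (hne : A.Nonempty)
    (hch : ∀ u ∈ A, ∀ v ∈ A, Relation.ReflTransGen T u v ∨ Relation.ReflTransGen T v u) :
    ∃ a ∈ A, ∀ w ∈ A, Relation.ReflTransGen T w a := by
  obtain ⟨a, ha1, ha2⟩ := chainMaxFinset hf.toFinset
    (by simpa [Set.Finite.toFinset] using hne)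
    (fun u hu v hv => hch u (hf.mem_toFinset.mp hu) v (hf.mem_toFinset.mp hv))
  exact ⟨a, hf.mem_toFinset.mp ha1, fun w hw => ha2 w (hf.mem_toFinset.mpr hw)⟩

private lemma splitWalk {Y : Set V} {a : V} {u v : V}
    (h : Relation.ReflTransGen (fun p q => p ∉ Y ∧ q ∉ Y ∧ E p q) u v) :
    Relation.ReflTransGen
      (fun p q => p ∉ (Y ∪ {w | Relation.ReflTransGen T w a}) ∧
        q ∉ (Y ∪ {w | Relation.ReflTransGen T w a}) ∧ E p q) u v ∨
    ∃ w, Relation.ReflTransGen T w a ∧ w ∉ Y ∧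
      Relation.ReflTransGen (fun p q => p ∉ Y ∧ q ∉ Y ∧ E p q) u w ∧
      Relation.ReflTransGen (fun p q => p ∉ Y ∧ q ∉ Y ∧ E p q) w v := by
  have hmono : ∀ {x y : V},
      Relation.ReflTransGen
        (fun p q => p ∉ (Y ∪ {w | Relation.ReflTransGen T w a}) ∧
          q ∉ (Y ∪ {w | Relation.ReflTransGen T w a}) ∧ E p q) x y →
      Relation.ReflTransGen (fun p q => p ∉ Y ∧ q ∉ Y ∧ E p q) x y := by
    intro x y hxy
    exact Relation.ReflTransGen.mono (fun p q hpq =>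
      ⟨fun hp => hpq.1 (Or.inl hp), fun hq => hpq.2.1 (Or.inl hq), hpq.2.2⟩) _ _ hxy
  induction h with
  | refl => exact Or.inl .refl
  | @tail c d h1 h2 ih =>
      rcases ih with hl | ⟨w, hw1, hw2, hw3, hw4⟩
      · by_cases hcD : Relation.ReflTransGen T c a
        · exact Or.inr ⟨c, hcD, h2.1, hmono hl, Relation.ReflTransGen.single h2⟩
        · by_cases hdD : Relation.ReflTransGen T d a
          · exact Or.inr ⟨d, hdD, h2.2.1, (hmono hl).tail h2, .refl⟩
          · refine Or.inl (hl.tail ?_)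
            refine ⟨?_, ?_, h2.2.2⟩
            · rintro (h | h)
              · exact h2.1 h
              · exact hcD h
            · rintro (h | h)
              · exact h2.2.1 h
              · exact hdD h
      · exact Or.inr ⟨w, hw1, hw2, hw3, hw4.tail h2⟩

private lemma leRestrict (hsub : ∀ u v, T u v → E u v) {X : Set V} :
    ∀ {u v : V}, Relation.ReflTransGen T u v →
      (∀ w, Relation.ReflTransGen T u w → w ∉ X) →
      Relation.ReflTransGen (fun p q => p ∉ X ∧ q ∉ X ∧ E p q) u v := by
  intro u v h
  induction h using Relation.ReflTransGen.head_induction_on with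
  | refl => intro _; exact .refl
  | head h' h ih =>
      intro hX
      refine Relation.ReflTransGen.head
        ⟨hX _ .refl, hX _ (Relation.ReflTransGen.single h'), hsub _ _ h'⟩
        (ih (fun w hw => hX w ((Relation.ReflTransGen.single h').trans hw)))

end NTAux
section NTAux2

variable {V : Type*} {E T : V → V → Prop} {root : V}

private lemma lemA (hroot : ∀ u, ¬ T u root) (huniq : ∀ v, v ≠ root → ∃! u, T u v)
    (hreach : ∀ v, Relation.ReflTransGen T root v) (h_norm : IsNormal E T)
    {Y : Set V}
    (hdc : ∀ u w, Relation.ReflTransGen T u w → w ∈ Y → u ∈ Y)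
    {R : ℕ → V} {M : ℕ}
    (hM1 : ∀ m, M ≤ m → R m ∉ Y)
    (hM2 : ∀ m m', M ≤ m → M ≤ m' → SameComp E Y (R m) (R m')) :
    ∃ a, a ∉ Y ∧ (∀ m, M ≤ m → SameComp E Y a (R m)) ∧
      (∀ u, u ∉ Y → SameComp E Y u (R M) → Relation.ReflTransGen T a u) := by
  set t := R M with ht
  have htY : t ∉ Y := hM1 M le_rfl
  set C : Set V := {w | w ∉ Y ∧ SameComp E Y w t} with hC
  have htC : t ∈ C := ⟨htY, .refl, .refl⟩
  set LB : Set V := {w | w ∉ Y ∧ ∀ u ∈ C, Relation.ReflTransGen T w u} with hLB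
  obtain ⟨g, hg1, hg2, hg3⟩ := regionMinExists hroot huniq hreach hdc htY
  have hgLB : g ∈ LB := by
    refine ⟨hg2, fun u hu => ?_⟩
    obtain ⟨gu, hgu1, hgu2, hgu3⟩ := regionMinExists hroot huniq hreach hdc hu.1
    have heq := sameCompMinEq hroot huniq hreach h_norm hdc hu.2
      ⟨hgu1, hgu2, hgu3⟩ ⟨hg1, hg2, hg3⟩
    exact heq ▸ hgu1
  have hLBsub : LB ⊆ {w | Relation.ReflTransGen T w t} := fun w hw => hw.2 t htC
  have hLBf : LB.Finite := (downsetFinite hroot huniq hreach t).subset hLBsub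
  obtain ⟨a, haLB, hamax⟩ := chainMaxSet hLBf ⟨g, hgLB⟩
    (fun u hu v hv => downsetChain hroot huniq hreach u v (hLBsub hu) (hLBsub hv))
  have haC : SameComp E Y a t := by
    by_contra hna
    set Z : Set V := Y ∪ {w | Relation.ReflTransGen T w a} with hZ
    have hZdc : ∀ u w, Relation.ReflTransGen T u w → w ∈ Z → u ∈ Z := by
      rintro u w huw (h | h)
      · exact Or.inl (hdc u w huw h)
      · exact Or.inr (huw.trans h)
    have hCnotZ : ∀ u ∈ C, u ∉ Z := by
      rintro u hu (h | h)
      · exact hu.1 h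
      · have hau := haLB.2 u hu
        have heq := leAntisymm h_norm h hau
        exact hna (heq ▸ hu.2)
    have claim1 : ∀ u ∈ C, ∀ v ∈ C,
        Relation.ReflTransGen (fun p q => p ∉ Z ∧ q ∉ Z ∧ E p q) u v := by
      intro u hu v hv
      have hpath : Relation.ReflTransGen (fun p q => p ∉ Y ∧ q ∉ Y ∧ E p q) u v :=
        hu.2.1.trans hv.2.2
      rcases splitWalk (T := T) (a := a) hpath with hl | ⟨w, hw1, hw2, hw3, hw4⟩
      · exact hl
      · exfalso
        have hwC : w ∈ C := ⟨hw2, hw4.trans hv.2.1, hu.2.2.trans hw3⟩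
        have heq := leAntisymm h_norm hw1 (haLB.2 w hwC)
        exact hna (heq ▸ hwC.2)
    have htZ : t ∉ Z := hCnotZ t htC
    obtain ⟨b, hb1, hb2, hb3⟩ := regionMinExists hroot huniq hreach hZdc htZ
    have hbLB : b ∈ LB := by
      refine ⟨fun h => hb2 (Or.inl h), fun u hu => ?_⟩
      obtain ⟨bu, hbu1, hbu2, hbu3⟩ := regionMinExists hroot huniq hreach hZdc (hCnotZ u hu)
      have hscZ : SameComp E Z u t := ⟨claim1 u hu t htC, claim1 t htC u hu⟩
      have heq := sameCompMinEq hroot huniq hreach h_norm hZdc hscZ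
        ⟨hbu1, hbu2, hbu3⟩ ⟨hb1, hb2, hb3⟩
      exact heq ▸ hbu1
    exact hb2 (Or.inr (hamax b hbLB))
  exact ⟨a, haLB.1, fun m hm => scTrans haC (hM2 M m le_rfl hm),
    fun u hu hsc => haLB.2 u ⟨hu, hsc⟩⟩

end NTAux2

theorem stmt_16 {V : Type*} (E T : V → V → Prop)
    (h_irr : ∀ v : V, ¬ E v v)
    (root : V)
    (h_arb : IsSpanningArborescence E T root)
    (h_norm : IsNormal E T)
    (R : ℕ → V) (hR : IsSolidRay E R) :
    ∃! r' : ℕ → V,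
      (Function.Injective r' ∧ r' 0 = root ∧ (∀ n : ℕ, T (r' n) (r' (n + 1)))) ∧
      RayEquiv E r' R := by
  obtain ⟨hsub, hroot, huniq, hreach⟩ := h_arb
  obtain ⟨⟨hRinj, hRstep⟩, hsolid⟩ := hR
  choose MX hMX1 hMX2 using hsolid
  have keyA : ∀ (Y : Set V) (hf : Y.Finite)
      (hdc : ∀ u w, Relation.ReflTransGen T u w → w ∈ Y → u ∈ Y),
      ∃ a, a ∉ Y ∧ (∀ m, MX Y hf ≤ m → SameComp E Y a (R m)) ∧
        (∀ u, u ∉ Y → SameComp E Y u (R (MX Y hf)) → Relation.ReflTransGen T a u) :=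
    fun Y hf hdc => lemA hroot huniq hreach h_norm hdc (hMX1 Y hf) (hMX2 Y hf)
  choose aF haF1 haF2 haF3 using keyA
  have dsF : ∀ p : V, Set.Finite {u | Relation.ReflTransGen T u p} :=
    downsetFinite hroot huniq hreach
  have hlbF : ∀ (Y : Set V) (hf : Y.Finite) hdc (m : ℕ), MX Y hf ≤ m →
      Relation.ReflTransGen T (aF Y hf hdc) (R m) :=
    fun Y hf hdc m hm =>
      haF3 Y hf hdc (R m) (hMX1 Y hf m hm) (hMX2 Y hf m (MX Y hf) hm le_rfl)
  have aFmono : ∀ (Y Y' : Set V) (hf : Y.Finite) (hf' : Y'.Finite) hdc hdc', Y ⊆ Y' →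
      Relation.ReflTransGen T (aF Y hf hdc) (aF Y' hf' hdc') := by
    intro Y Y' hf hf' hdc hdc' hss
    have h1 : SameComp E Y' (aF Y' hf' hdc') (R (max (MX Y hf) (MX Y' hf'))) :=
      haF2 Y' hf' hdc' _ (le_max_right _ _)
    have h2 : SameComp E Y (aF Y' hf' hdc') (R (MX Y hf)) :=
      scTrans (scMono hss h1) (hMX2 Y hf _ _ (le_max_left _ _) le_rfl)
    exact haF3 Y hf hdc _ (fun hmem => haF1 Y' hf' hdc' (hss hmem)) h2
  have hEmptyDC : ∀ u w, Relation.ReflTransGen T u w → w ∈ (∅ : Set V) → u ∈ (∅ : Set V) :=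
    fun _ _ _ h => h.elim
  have hDsDC : ∀ p : V, ∀ u w, Relation.ReflTransGen T u w →
      w ∈ {x | Relation.ReflTransGen T x p} → u ∈ {x | Relation.ReflTransGen T x p} :=
    fun p u w h hw => h.trans hw
  obtain ⟨A, hA0, hAS⟩ : ∃ A : ℕ → V, A 0 = aF ∅ Set.finite_empty hEmptyDC ∧
      ∀ n, A (n+1) = aF {x | Relation.ReflTransGen T x (A n)} (dsF (A n)) (hDsDC (A n)) :=
    ⟨fun n => Nat.rec (motive := fun _ => V) (aF ∅ Set.finite_empty hEmptyDC)
      (fun _ p => aF {x | Relation.ReflTransGen T x p} (dsF p) (hDsDC p)) n, rfl, fun n => rfl⟩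
  have hAstep : ∀ n, Relation.ReflTransGen T (A n) (A (n+1)) := by
    intro n
    induction n with
    | zero =>
        have h := aFmono ∅ {x | Relation.ReflTransGen T x (A 0)} Set.finite_empty
          (dsF (A 0)) hEmptyDC (hDsDC (A 0)) (Set.empty_subset _)
        rw [← hA0, ← hAS 0] at h
        exact h
    | succ k ih =>
        have h := aFmono {x | Relation.ReflTransGen T x (A k)}
          {x | Relation.ReflTransGen T x (A (k+1))} (dsF (A k)) (dsF (A (k+1)))
          (hDsDC (A k)) (hDsDC (A (k+1)))
          (fun u hu => Relation.ReflTransGen.trans hu ih)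
        rw [← hAS k, ← hAS (k+1)] at h
        exact h
  have hAnotle : ∀ n, ¬ Relation.ReflTransGen T (A (n+1)) (A n) := by
    intro n h
    have h2 := haF1 {x | Relation.ReflTransGen T x (A n)} (dsF (A n)) (hDsDC (A n))
    rw [← hAS n] at h2
    exact h2 h
  have hAle : ∀ m n, m ≤ n → Relation.ReflTransGen T (A m) (A n) := by
    intro m n h
    induction n, h using Nat.le_induction with
    | base => exact .refl
    | succ k hk ih => exact ih.trans (hAstep k)
  have hAinj : Function.Injective A := by
    have hlt : ∀ m n, m < n → A m ≠ A n := by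
      intro m n hmn heq
      apply hAnotle m
      have h := hAle (m+1) n hmn
      rw [← heq] at h
      exact h
    intro m n hmn
    by_contra hne
    rcases Nat.lt_or_ge m n with h | h
    · exact hlt m n h hmn
    · exact hlt n m (lt_of_le_of_ne h (Ne.symm hne)) hmn.symm
  have hAtail : ∀ n, ∃ Mn, ∀ m, Mn ≤ m → Relation.ReflTransGen T (A n) (R m) := by
    intro n
    cases n with
    | zero =>
        refine ⟨MX ∅ Set.finite_empty, fun m hm => ?_⟩
        rw [hA0]
        exact hlbF ∅ _ _ m hm
    | succ k =>
        refine ⟨MX {x | Relation.ReflTransGen T x (A k)} (dsF (A k)), fun m hm => ?_⟩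
        rw [hAS k]
        exact hlbF _ _ _ m hm
  have hnext : ∀ p : V, (∃ m, Relation.ReflTransGen T p (A m)) →
      ∃ c, T p c ∧ ∃ m, Relation.ReflTransGen T c (A m) := by
    rintro p ⟨m, hm⟩
    have hle2 : Relation.ReflTransGen T p (A (m+1)) := hm.trans (hAstep m)
    rcases hle2.cases_head with heq | ⟨c, hc1, hc2⟩
    · exfalso
      apply hAnotle m
      rw [← heq]
      exact hm
    · exact ⟨c, hc1, m+1, hc2⟩
  have hnx : ∀ p : {x : V // ∃ m, Relation.ReflTransGen T x (A m)},
      ∃ q : {x : V // ∃ m, Relation.ReflTransGen T x (A m)}, T p.1 q.1 := by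
    intro p
    obtain ⟨c, hc, hm⟩ := hnext p.1 p.2
    exact ⟨⟨c, hm⟩, hc⟩
  choose nx hnxs using hnx
  obtain ⟨sq, hsq0, hsqS⟩ : ∃ sq : ℕ → {x : V // ∃ m, Relation.ReflTransGen T x (A m)},
      sq 0 = ⟨root, 0, hreach (A 0)⟩ ∧ ∀ n, sq (n+1) = nx (sq n) :=
    ⟨fun n => Nat.rec (motive := fun _ => {x : V // ∃ m, Relation.ReflTransGen T x (A m)})
      ⟨root, 0, hreach (A 0)⟩ (fun _ p => nx p) n, rfl, fun n => rfl⟩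
  set r' : ℕ → V := fun n => (sq n).1 with hr'def
  have hr'0 : r' 0 = root := by
    show (sq 0).1 = root
    rw [hsq0]
  have hr'T : ∀ n, T (r' n) (r' (n+1)) := by
    intro n
    show T (sq n).1 (sq (n+1)).1
    rw [hsqS n]
    exact hnxs (sq n)
  have hr'S : ∀ n, ∃ m, Relation.ReflTransGen T (r' n) (A m) := fun n => (sq n).2
  have hr'le : ∀ n m, n ≤ m → Relation.ReflTransGen T (r' n) (r' m) := by
    intro n m h
    induction m, h using Nat.le_induction with
    | base => exact .refl
    | succ k hk ih => exact ih.tail (hr'T k)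
  have hr'tg : ∀ n m, n < m → Relation.TransGen T (r' n) (r' m) := by
    intro n m h
    exact Relation.TransGen.head' (hr'T n) (hr'le (n+1) m h)
  have hr'inj : Function.Injective r' := by
    intro m n hmn
    by_contra hne
    rcases Nat.lt_or_ge m n with h | h
    · have := hr'tg m n h
      rw [hmn] at this
      exact tgIrrefl h_norm (r' n) this
    · have := hr'tg n m (lt_of_le_of_ne h (Ne.symm hne))
      rw [hmn] at this
      exact tgIrrefl h_norm (r' n) this
  have hdsRay : ∀ (z : ℕ → V), z 0 = root → (∀ n, T (z n) (z (n+1))) →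
      ∀ n u, Relation.ReflTransGen T u (z n) → ∃ j, j ≤ n ∧ u = z j := by
    intro z hz0 hzT n
    induction n with
    | zero =>
        intro u hu
        rw [hz0] at hu
        exact ⟨0, le_rfl, by rw [hz0]; exact eqRootOfLe hroot hu⟩
    | succ k ih =>
        intro u hu
        rcases leParentStep hroot huniq (hzT k) hu with h | h
        · exact ⟨k+1, le_rfl, h⟩
        · obtain ⟨j, hj, hj2⟩ := ih u h
          exact ⟨j, hj.trans (Nat.le_succ k), hj2⟩
  have hS'cover : ∀ v, (∃ m, Relation.ReflTransGen T v (A m)) → ∃ n, v = r' n := by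
    rintro v ⟨m, hm⟩
    by_contra hne
    push_neg at hne
    have hall : ∀ n, r' n ∈ {u | Relation.ReflTransGen T u v} := by
      intro n
      obtain ⟨mn, hmn⟩ := hr'S n
      have h1 : Relation.ReflTransGen T v (A (max m mn)) := hm.trans (hAle m _ (le_max_left _ _))
      have h2 : Relation.ReflTransGen T (r' n) (A (max m mn)) :=
        hmn.trans (hAle mn _ (le_max_right _ _))
      rcases downsetChain hroot huniq hreach v (r' n) h1 h2 with h | h
      · obtain ⟨j, hj, hj2⟩ := hdsRay r' hr'0 hr'T n v h
        exact absurd hj2 (hne j)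
      · exact h
    exact (dsF v).not_infinite (Set.infinite_of_injective_forall_mem hr'inj hall)
  have haFrange : ∀ (Y : Set V) (hf : Y.Finite) hdc, ∃ n, aF Y hf hdc = r' n := by
    intro Y hf hdc
    apply hS'cover
    by_contra h
    push_neg at h
    have hmem : ∀ m, A m ∈ {u | Relation.ReflTransGen T u (aF Y hf hdc)} := by
      intro m
      obtain ⟨Mn, hMn⟩ := hAtail m
      have h1 := hMn (max Mn (MX Y hf)) (le_max_left _ _)
      have h2 := hlbF Y hf hdc (max Mn (MX Y hf)) (le_max_right _ _)
      rcases downsetChain hroot huniq hreach (A m) (aF Y hf hdc) h1 h2 with h3 | h3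
      · exact h3
      · exact absurd h3 (h m)
    exact (dsF (aF Y hf hdc)).not_infinite (Set.infinite_of_injective_forall_mem hAinj hmem)
  have hEquiv : RayEquiv E r' R := by
    intro X hXf
    set DX : Set V := {u | ∃ x ∈ X, Relation.ReflTransGen T u x} with hDXdef
    have hDXf : DX.Finite := by
      have heq : DX = ⋃ x ∈ X, {u | Relation.ReflTransGen T u x} := by
        ext u
        simp [hDXdef]
      rw [heq]
      exact hXf.biUnion (fun x _ => dsF x)
    have hXDX : X ⊆ DX := fun x hx => ⟨x, hx, .refl⟩
    have hfin : {n : ℕ | r' n ∈ DX}.Finite := hDXf.preimage hr'inj.injOn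
    obtain ⟨B, hB⟩ := hfin.bddAbove
    have hN₀ : ∀ n, B + 1 ≤ n → r' n ∉ DX := by
      intro n hn hmem
      have := hB hmem
      omega
    set N₀ := B + 1 with hN₀def
    set Ys : Set V := DX ∪ (fun i => r' i) '' Set.Iio N₀ with hYsdef
    have hYsf : Ys.Finite := hDXf.union ((Set.finite_Iio _).image _)
    have hYsdc : ∀ u w, Relation.ReflTransGen T u w → w ∈ Ys → u ∈ Ys := by
      rintro u w huw (⟨x, hx, hwx⟩ | ⟨i, hi, rfl⟩)
      · exact Or.inl ⟨x, hx, huw.trans hwx⟩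
      · obtain ⟨j, hj, rfl⟩ := hdsRay r' hr'0 hr'T i u huw
        exact Or.inr ⟨j, lt_of_le_of_lt hj hi, rfl⟩
    have hXYs : X ⊆ Ys := fun x hx => Or.inl (hXDX hx)
    obtain ⟨k, hk⟩ := haFrange Ys hYsf hYsdc
    have hkN₀ : N₀ ≤ k := by
      by_contra h
      push_neg at h
      have hmem : aF Ys hYsf hYsdc ∈ Ys := by
        rw [hk]
        exact Or.inr ⟨k, h, rfl⟩
      exact haF1 Ys hYsf hYsdc hmem
    refine ⟨k, max (MX Ys hYsf) (MX X hXf), ?_, ?_, ?_⟩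
    · intro n hn hx
      exact hN₀ n (le_trans hkN₀ hn) (hXDX hx)
    · intro m hm
      exact hMX1 X hXf m (le_trans (le_max_right _ _) hm)
    · intro n m hn hm
      have hsc1 : SameComp E Ys (aF Ys hYsf hYsdc) (R m) :=
        haF2 Ys hYsf hYsdc m (le_trans (le_max_left _ _) hm)
      have hsc2 : SameComp E X (aF Ys hYsf hYsdc) (R m) := scMono hXYs hsc1
      have hpathk : ∀ d, Relation.ReflTransGen
          (fun p q => p ∉ X ∧ q ∉ X ∧ E p q) (r' k) (r' (k+d)) := by
        intro d
        induction d with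
        | zero => exact .refl
        | succ e ih =>
            refine ih.tail ⟨?_, ?_, hsub _ _ (hr'T (k+e))⟩
            · exact fun hx => hN₀ (k+e) (le_trans hkN₀ (Nat.le_add_right _ _)) (hXDX hx)
            · exact fun hx => hN₀ (k+e+1) (by omega) (hXDX hx)
      have hback : Relation.ReflTransGen (fun p q => p ∉ X ∧ q ∉ X ∧ E p q) (R m) (r' n) := by
        have h1 := hsc2.2
        rw [hk] at h1
        have h2 := hpathk (n - k)
        have heqn : k + (n - k) = n := by omega
        rw [heqn] at h2
        exact h1.trans h2
      obtain ⟨mA, hmA⟩ := hr'S n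
      set Y' : Set V := Ys ∪ {u | Relation.ReflTransGen T u (A mA)} with hY'def
      have hY'f : Y'.Finite := hYsf.union (dsF (A mA))
      have hY'dc : ∀ u w, Relation.ReflTransGen T u w → w ∈ Y' → u ∈ Y' := by
        rintro u w huw (h | h)
        · exact Or.inl (hYsdc u w huw h)
        · exact Or.inr (huw.trans h)
      have hXY' : X ⊆ Y' := fun x hx => Or.inl (hXYs hx)
      have hle1 : Relation.ReflTransGen T (r' n) (aF Y' hY'f hY'dc) := by
        have h3 := aFmono {x | Relation.ReflTransGen T x (A mA)} Y' (dsF (A mA)) hY'f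
          (hDsDC (A mA)) hY'dc Set.subset_union_right
        rw [← hAS mA] at h3
        exact (hmA.trans (hAstep mA)).trans h3
      have hforward1 : Relation.ReflTransGen (fun p q => p ∉ X ∧ q ∉ X ∧ E p q)
          (r' n) (aF Y' hY'f hY'dc) := by
        refine leRestrict hsub hle1 ?_
        intro w hw hwX
        exact hN₀ n (le_trans hkN₀ hn) ⟨w, hwX, hw⟩
      have hsc3 : SameComp E X (aF Y' hY'f hY'dc) (R (max (MX Y' hY'f) (MX X hXf))) :=
        scMono hXY' (haF2 Y' hY'f hY'dc _ (le_max_left _ _))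
      have hsc4 : SameComp E X (R (max (MX Y' hY'f) (MX X hXf))) (R m) :=
        hMX2 X hXf _ m (le_max_right _ _) (le_trans (le_max_right _ _) hm)
      exact ⟨hforward1.trans (hsc3.1.trans hsc4.1), hback⟩
  refine ⟨r', ⟨⟨hr'inj, hr'0, hr'T⟩, hEquiv⟩, ?_⟩
  rintro y ⟨⟨hyinj, hy0, hyT⟩, hyE⟩
  have htlb : ∀ (z : ℕ → V), Function.Injective z → z 0 = root → (∀ n, T (z n) (z (n+1))) →
      RayEquiv E z R → ∀ n, ∃ Mz, ∀ m, Mz ≤ m → Relation.ReflTransGen T (z n) (R m) := by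
    intro z hzi hz0 hzT hzE n
    set Yz : Set V := (fun i => z i) '' Set.Iio n with hYz
    have hYzf : Yz.Finite := (Set.finite_Iio _).image _
    have hYzdc : ∀ u w, Relation.ReflTransGen T u w → w ∈ Yz → u ∈ Yz := by
      rintro u w huw ⟨i, hi, rfl⟩
      obtain ⟨j, hj, rfl⟩ := hdsRay z hz0 hzT i u huw
      exact ⟨j, lt_of_le_of_lt hj hi, rfl⟩
    obtain ⟨N', M', hA1, hB1, hC1⟩ := hzE Yz hYzf
    refine ⟨M', fun m hm => ?_⟩
    have hznY : z n ∉ Yz := by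
      rintro ⟨j, hj, hje⟩
      exact absurd (hzi hje) (Nat.ne_of_lt hj)
    have hzle : ∀ a b : ℕ, a ≤ b → Relation.ReflTransGen T (z a) (z b) := by
      intro a b h
      induction b, h using Nat.le_induction with
      | base => exact .refl
      | succ c hc ih => exact ih.tail (hzT c)
    have h1 : SameComp E Yz (z (max N' n)) (R m) := hC1 (max N' n) m (le_max_left _ _) hm
    have hminz : Relation.ReflTransGen T (z n) (z (max N' n)) := hzle n _ (le_max_right _ _)
    have hminprop : ∀ u, Relation.ReflTransGen T u (z n) → u ∉ Yz → u = z n := by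
      intro u hu hu2
      obtain ⟨j, hj, rfl⟩ := hdsRay z hz0 hzT n u hu
      rcases lt_or_eq_of_le hj with h | h
      · exact absurd ⟨j, h, rfl⟩ hu2
      · rw [h]
    obtain ⟨b, hb1, hb2, hb3⟩ := regionMinExists hroot huniq hreach hYzdc (hB1 m hm)
    have heq := sameCompMinEq hroot huniq hreach h_norm hYzdc h1
      ⟨hminz, hznY, hminprop⟩ ⟨hb1, hb2, hb3⟩
    rw [heq]
    exact hb1
  have hyr : ∀ n, y n = r' n := by
    intro n
    induction n using Nat.strong_induction_on with
    | _ n ih =>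
      obtain ⟨M1, h1⟩ := htlb y hyinj hy0 hyT hyE n
      obtain ⟨M2, h2⟩ := htlb r' hr'inj hr'0 hr'T hEquiv n
      rcases downsetChain hroot huniq hreach (y n) (r' n)
        (h1 (max M1 M2) (le_max_left _ _)) (h2 (max M1 M2) (le_max_right _ _)) with h | h
      · obtain ⟨j, hj, hje⟩ := hdsRay r' hr'0 hr'T n (y n) h
        rcases lt_or_eq_of_le hj with hlt | heq
        · exact absurd (hyinj (hje.trans (ih j hlt).symm)) (by omega)
        · rw [heq] at hje
          exact hje
      · obtain ⟨j, hj, hje⟩ := hdsRay y hy0 hyT n (r' n) h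
        rcases lt_or_eq_of_le hj with hlt | heq
        · have : r' n = r' j := hje.trans (ih j hlt)
          exact absurd (hr'inj this) (by omega)
        · rw [heq] at hje
          exact hje.symm
  exact funext hyr
end

section
/- Let D be a solid digraph and let T be a normal spanning arborescence of D. Then every ray of T (an injective map r : ℕ → V with T (r n) (r (n+1)) for all n) is a solid ray of D. -/
theorem stmt_17 {V : Type*} (E T : V → V → Prop)
    (h_irr : ∀ v : V, ¬ E v v)
    (h_solid : IsSolid E)
    (root : V)
    (h_arb : IsSpanningArborescence E T root)
    (h_norm : IsNormal E T)
    (r : ℕ → V) (h_inj : Function.Injective r)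
    (h_ray : ∀ n : ℕ, T (r n) (r (n + 1))) :
    IsSolidRay E r := by
  constructor
  · exact ⟨h_inj, fun n => h_arb.1 _ _ (h_ray n)⟩
  intro X hX
  -- Beyond some index N1, the ray avoids X
  have hpre : (r ⁻¹' X).Finite := hX.preimage h_inj.injOn
  obtain ⟨N0, hN0⟩ := hpre.bddAbove
  have hout : ∀ n, N0 + 1 ≤ n → r n ∉ X := by
    intro n hn hmem
    have := hN0 hmem
    omega
  set N1 := N0 + 1 with hN1def
  -- forward reachability along the ray in D − X
  have hreach : ∀ n m, N1 ≤ n → n ≤ m →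
      Relation.ReflTransGen (fun a b => a ∉ X ∧ b ∉ X ∧ E a b) (r n) (r m) := by
    intro n m hn hnm
    induction m, hnm using Nat.le_induction with
    | base => exact Relation.ReflTransGen.refl
    | succ m hm ih =>
        exact ih.tail ⟨hout m (le_trans hn hm), hout (m + 1) (by omega),
          h_arb.1 _ _ (h_ray m)⟩
  have hF := h_solid X hX
  let comp : ℕ → Set V := fun k => {u | u ∉ X ∧ SameComp E X u (r (N1 + k))}
  have hmem : ∀ k, comp k ∈
      {C : Set V | ∃ v, v ∉ X ∧ C = {u | u ∉ X ∧ SameComp E X u v}} :=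
    fun k => ⟨r (N1 + k), hout _ (by omega), rfl⟩
  haveI := hF.to_subtype
  let g : ℕ → {C : Set V // C ∈
      {C : Set V | ∃ v, v ∉ X ∧ C = {u | u ∉ X ∧ SameComp E X u v}}} :=
    fun k => ⟨comp k, hmem k⟩
  obtain ⟨y, hy'⟩ := Finite.exists_infinite_fiber g
  have hy : (g ⁻¹' {y}).Infinite := Set.infinite_coe_iff.mp hy'
  obtain ⟨k0, hk0⟩ := hy.nonempty
  have hself : ∀ k, r (N1 + k) ∈ comp k :=
    fun k => ⟨hout _ (by omega), Relation.ReflTransGen.refl, Relation.ReflTransGen.refl⟩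
  have hsame : ∀ k ∈ g ⁻¹' {y}, SameComp E X (r (N1 + k)) (r (N1 + k0)) := by
    intro k hk
    have hgk : g k = g k0 := by
      have h1 : g k = y := hk
      have h2 : g k0 = y := hk0
      rw [h1, h2]
    have hck : comp k = comp k0 := congrArg Subtype.val hgk
    have := hself k
    rw [hck] at this
    exact this.2
  refine ⟨N1 + k0, fun n hn => hout n (by omega), ?_⟩
  have main : ∀ n, N1 + k0 ≤ n → SameComp E X (r n) (r (N1 + k0)) := by
    intro n hn
    obtain ⟨k, hkfib, hkge⟩ : ∃ k ∈ g ⁻¹' {y}, n ≤ N1 + k := by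
      obtain ⟨k, hk, hk2⟩ := hy.exists_gt n
      exact ⟨k, hk, by omega⟩
    have h1 := hreach (N1 + k0) n (by omega) hn
    have h2 := hreach n (N1 + k) (by omega) hkge
    exact ⟨h2.trans (hsame k hkfib).1, h1⟩
  intro m n hm hn
  exact ⟨(main m hm).1.trans (main n hn).2, (main n hn).1.trans (main m hm).2⟩
end

section
/- Let D be a finite tournament with a normal spanning arborescence T, and let v₁ ⊴ v₂ ⊴ … ⊴ v_k be the enumeration of all vertices of D in increasing normal order of T. Then E v_i v_{i+1} holds for every i < k; in particular v₁, v₂, …, v_k is a directed Hamilton path of D that respects the normal order of T. -/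
theorem stmt_19 {V : Type*} [Fintype V] (E T : V → V → Prop)
    (h_irr : ∀ v : V, ¬ E v v)
    (h_tour : ∀ u v : V, u ≠ v → Xor' (E u v) (E v u))
    (root : V)
    (h_arb : IsSpanningArborescence E T root)
    (h_norm : IsNormal E T)
    (k : ℕ) (e : Fin k → V) (h_bij : Function.Bijective e)
    (h_mono : ∀ i j : Fin k, i ≤ j → Relation.ReflTransGen (NormalAssistant E T) (e i) (e j)) :
    ∀ (i : ℕ) (hi : i + 1 < k), E (e ⟨i, Nat.lt_of_succ_lt hi⟩) (e ⟨i + 1, hi⟩) := by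
  obtain ⟨hTE, -, -, -⟩ := h_arb
  set H := NormalAssistant E T with hHdef
  have antisymm : ∀ a b : V, Relation.ReflTransGen H a b →
      Relation.ReflTransGen H b a → a = b := by
    intro a b hab hba
    rcases (Relation.reflTransGen_iff_eq_or_transGen).1 hab with h | h
    · exact h.symm
    rcases (Relation.reflTransGen_iff_eq_or_transGen).1 hba with h' | h'
    · exact h'
    exact absurd (h.trans h') (h_norm a)
  intro i hi
  have hi' := Nat.lt_of_succ_lt hi
  set v := e ⟨i, hi'⟩ with hv
  set w := e ⟨i + 1, hi⟩ with hw
  have hne : v ≠ w := by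
    intro h
    have := h_bij.1 h
    simp [Fin.ext_iff] at this
  have hvw : Relation.ReflTransGen H v w := h_mono _ _ (by simp [Fin.le_def])
  have htrans : Relation.TransGen H v w := by
    rcases (Relation.reflTransGen_iff_eq_or_transGen).1 hvw with h | h
    · exact absurd h.symm hne
    · exact h
  have key : ∀ x, Relation.ReflTransGen H v x → Relation.ReflTransGen H x w →
      x = v ∨ x = w := by
    intro x hvx hxw
    obtain ⟨m, rfl⟩ := h_bij.2 x
    rcases le_or_gt m ⟨i, hi'⟩ with hm | hm
    · exact Or.inl (antisymm _ _ (h_mono _ _ hm) hvx)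
    · refine Or.inr (antisymm _ _ hxw (h_mono _ _ ?_))
      exact Fin.le_def.2 (Nat.succ_le_of_lt (Fin.lt_def.1 hm))
  obtain ⟨x, hvx, hxw⟩ := (Relation.TransGen.head'_iff).1 htrans
  have hHvw : H v w := by
    rcases key x (Relation.ReflTransGen.single hvx) hxw with rfl | rfl
    · exact absurd (Relation.TransGen.single hvx) (h_norm v)
    · exact hvx
  rcases hHvw with hT | ⟨h1, h2, hex⟩
  · exact hTE _ _ hT
  · by_contra hE
    have hEwv : E w v := by
      rcases h_tour v w hne with ⟨h, -⟩ | ⟨h, -⟩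
      · exact absurd h hE
      · exact h
    have hHwv : H w v :=
      Or.inr ⟨h2, h1, w, v, Relation.ReflTransGen.refl, Relation.ReflTransGen.refl, hEwv⟩
    have hHvw' : H v w := Or.inr ⟨h1, h2, hex⟩
    exact h_norm v ((Relation.TransGen.single hHvw').tail hHwv)
end
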